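/- Let γ(s,t) be a smooth two-parameter family of invertible symmetric real n×n matrices and let D_s ε := ∂_s ε - (1/2)(γ_s γ⁻¹ ε + ε γ⁻¹ γ_s), similarly D_t. Then for any smooth family ε(s,t) of symmetric matrices, the curvature operator satisfies D_s D_t ε - D_t D_s ε = (1/4) γ [[γ⁻¹ γ_t, γ⁻¹ γ_s], γ⁻¹ ε], where [A,B] = AB - BA. -/

import Mathlib

open Matrix

attribute [local instance] Matrix.normedAddCommGroup Matrix.normedSpace


section pihelp

theorem hasDerivAt_pi2 {n : ℕ} {f : ℝ → (Fin n → Fin n → ℝ)} {f' : Fin n → Fin n → ℝ}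
    {x : ℝ} :
    HasDerivAt f f' x ↔ ∀ i j, HasDerivAt (fun u => f u i j) (f' i j) x := by
  rw [hasDerivAt_pi]
  exact forall_congr' fun i => hasDerivAt_pi

end pihelp

section helpers

variable {n : ℕ}

theorem hasDerivAt_matrix {f : ℝ → Matrix (Fin n) (Fin n) ℝ} {f' : Matrix (Fin n) (Fin n) ℝ}
    {x : ℝ} :
    HasDerivAt f f' x ↔ ∀ i j, HasDerivAt (fun u => f u i j) (f' i j) x :=
  hasDerivAt_pi2

theorem HasDerivAt.matrix_mul {f g : ℝ → Matrix (Fin n) (Fin n) ℝ}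
    {f' g' : Matrix (Fin n) (Fin n) ℝ} {x : ℝ}
    (hf : HasDerivAt f f' x) (hg : HasDerivAt g g' x) :
    HasDerivAt (fun u => f u * g u) (f' * g x + f x * g') x := by
  rw [hasDerivAt_matrix] at hf hg ⊢
  intro i j
  simp only [Matrix.mul_apply, Matrix.add_apply]
  rw [← Finset.sum_add_distrib]
  exact HasDerivAt.fun_sum fun k _ => ((hf i k).mul (hg k j)).congr_deriv (by ring)

theorem hasDerivAt_matrix_det {f : ℝ → Matrix (Fin n) (Fin n) ℝ} {x : ℝ}
    (hf : DifferentiableAt ℝ f x) :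
    DifferentiableAt ℝ (fun u => (f u).det) x := by
  have h : ∀ i j, DifferentiableAt ℝ (fun u => f u i j) x := by
    intro i j
    exact ((differentiableAt_pi.1 (differentiableAt_pi.1 hf i)) j)
  simp only [Matrix.det_apply']
  apply DifferentiableAt.fun_sum
  intro σ _
  apply DifferentiableAt.const_mul
  apply DifferentiableAt.fun_finsetProd
  intro i _
  exact h (σ i) i

end helpers

section helpers2
variable {n : ℕ}
attribute [local instance] Matrix.normedAddCommGroup Matrix.normedSpace

theorem differentiableAt_matrix_det {A : ℝ → Matrix (Fin n) (Fin n) ℝ} {x : ℝ}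
    (h : ∀ i j, DifferentiableAt ℝ (fun u => A u i j) x) :
    DifferentiableAt ℝ (fun u => (A u).det) x := by
  simp only [Matrix.det_apply']
  apply DifferentiableAt.fun_sum
  intro σ _
  apply DifferentiableAt.const_mul
  apply DifferentiableAt.fun_finsetProd
  intro i _
  exact h (σ i) i

theorem hasDerivAt_matrix_inv {γ : ℝ → Matrix (Fin n) (Fin n) ℝ}
    {γ' : Matrix (Fin n) (Fin n) ℝ} {x : ℝ}
    (hU : ∀ u, IsUnit (γ u)) (hd : HasDerivAt γ γ' x) :
    HasDerivAt (fun u => (γ u)⁻¹) (-((γ x)⁻¹ * γ' * (γ x)⁻¹)) x := by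
  have hdet : ∀ u, IsUnit (γ u).det := fun u => (Matrix.isUnit_iff_isUnit_det _).1 (hU u)
  have hdet0 : ∀ u, (γ u).det ≠ 0 := fun u => (hdet u).ne_zero
  have hent : ∀ i j, DifferentiableAt ℝ (fun u => γ u i j) x :=
    fun i j => ((hasDerivAt_matrix.1 hd) i j).differentiableAt
  have hadj : ∀ i j, DifferentiableAt ℝ (fun u => (γ u).adjugate i j) x := by
    intro i j
    simp only [Matrix.adjugate_apply]
    apply differentiableAt_matrix_det
    intro k l
    simp only [Matrix.updateRow_apply]
    by_cases hk : k = j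
    · simp [hk]
    · simp only [hk, if_false]
      exact hent k l
  have hinvd : DifferentiableAt ℝ (fun u => (γ u)⁻¹) x := by
    apply differentiableAt_pi.2
    intro i
    apply differentiableAt_pi.2
    intro j
    have heq : (fun u => (γ u)⁻¹ i j) = fun u => ((γ u).det)⁻¹ * (γ u).adjugate i j := by
      funext u
      rw [Matrix.inv_def, Matrix.smul_apply, Ring.inverse_eq_inv, smul_eq_mul]
    rw [heq]
    exact ((differentiableAt_matrix_det hent).inv (hdet0 x)).mul (hadj i j)
  obtain ⟨d, hF⟩ : ∃ d, HasDerivAt (fun u => (γ u)⁻¹) d x := ⟨_, hinvd.hasDerivAt⟩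
  have hprod := hd.matrix_mul hF
  have hone : (fun u => γ u * (γ u)⁻¹) = fun _ => (1 : Matrix (Fin n) (Fin n) ℝ) :=
    funext fun u => Matrix.mul_nonsing_inv _ (hdet u)
  rw [hone] at hprod
  have h0 : γ' * (γ x)⁻¹ + γ x * d = 0 := hprod.unique (hasDerivAt_const x 1)
  have h1 : γ x * d = -(γ' * (γ x)⁻¹) := by
    have := eq_neg_of_add_eq_zero_right h0
    rw [← neg_eq_iff_eq_neg] at this ⊢
    rw [this]
  have hd2 : d = -((γ x)⁻¹ * γ' * (γ x)⁻¹) :=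
    calc d = (γ x)⁻¹ * (γ x * d) := by
            rw [← mul_assoc, Matrix.nonsing_inv_mul _ (hdet x), one_mul]
    _ = -((γ x)⁻¹ * (γ' * (γ x)⁻¹)) := by rw [h1, mul_neg]
    _ = -((γ x)⁻¹ * γ' * (γ x)⁻¹) := by rw [mul_assoc]
  rw [← hd2]
  exact hF

end helpers2

/-- Pointwise curvature formula for the Rougée covariant derivative
`D_s ε = ∂_s ε - (1/2)(γ_s γ⁻¹ ε + ε γ⁻¹ γ_s)` on a two-parameter family:
`D_s D_t ε - D_t D_s ε = (1/4) γ [[γ⁻¹ γ_t, γ⁻¹ γ_s], γ⁻¹ ε]`. -/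
theorem rougee_curvature (n : ℕ)
    (γ γs γt γst ε εs εt εst DtE DsE DtEs DsEt DsDtE DtDsE :
      ℝ → ℝ → Matrix (Fin n) (Fin n) ℝ)
    (hγinv : ∀ s t, IsUnit (γ s t))
    (hγsymm : ∀ s t, (γ s t).IsSymm)
    (hεsymm : ∀ s t, (ε s t).IsSymm)
    -- first partial derivatives of γ, with equal (symmetric) mixed partials
    (hγs : ∀ s t, HasDerivAt (fun u => γ u t) (γs s t) s)
    (hγt : ∀ s t, HasDerivAt (fun v => γ s v) (γt s t) t)
    (hγst : ∀ s t, HasDerivAt (fun v => γs s v) (γst s t) t)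
    (hγts : ∀ s t, HasDerivAt (fun u => γt u t) (γst s t) s)
    -- first partial derivatives of ε, with equal (symmetric) mixed partials
    (hεs : ∀ s t, HasDerivAt (fun u => ε u t) (εs s t) s)
    (hεt : ∀ s t, HasDerivAt (fun v => ε s v) (εt s t) t)
    (hεst : ∀ s t, HasDerivAt (fun v => εs s v) (εst s t) t)
    (hεts : ∀ s t, HasDerivAt (fun u => εt u t) (εst s t) s)
    -- the first covariant derivatives
    (hDtE : ∀ s t, DtE s t =
      εt s t - (1 / 2 : ℝ) • (γt s t * (γ s t)⁻¹ * ε s t + ε s t * (γ s t)⁻¹ * γt s t))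
    (hDsE : ∀ s t, DsE s t =
      εs s t - (1 / 2 : ℝ) • (γs s t * (γ s t)⁻¹ * ε s t + ε s t * (γ s t)⁻¹ * γs s t))
    -- their partial derivatives
    (hDtEs : ∀ s t, HasDerivAt (fun u => DtE u t) (DtEs s t) s)
    (hDsEt : ∀ s t, HasDerivAt (fun v => DsE s v) (DsEt s t) t)
    -- the second covariant derivatives
    (hDsDtE : ∀ s t, DsDtE s t =
      DtEs s t - (1 / 2 : ℝ) • (γs s t * (γ s t)⁻¹ * DtE s t + DtE s t * (γ s t)⁻¹ * γs s t))
    (hDtDsE : ∀ s t, DtDsE s t =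
      DsEt s t - (1 / 2 : ℝ) • (γt s t * (γ s t)⁻¹ * DsE s t + DsE s t * (γ s t)⁻¹ * γt s t)) :
    ∀ s t, DsDtE s t - DtDsE s t =
      (1 / 4 : ℝ) • (γ s t *
        ⁅⁅(γ s t)⁻¹ * γt s t, (γ s t)⁻¹ * γs s t⁆, (γ s t)⁻¹ * ε s t⁆) := by
  intro s t
  have hunit : IsUnit (γ s t) := hγinv s t
  have hdet : IsUnit (γ s t).det := (Matrix.isUnit_iff_isUnit_det _).1 hunit
  have hgp : ∀ X : Matrix (Fin n) (Fin n) ℝ, γ s t * ((γ s t)⁻¹ * X) = X := fun X => by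
    rw [← mul_assoc, Matrix.mul_nonsing_inv _ hdet, one_mul]
  -- derivative of the inverse in each direction
  have hPs : HasDerivAt (fun u => (γ u t)⁻¹)
      (-((γ s t)⁻¹ * γs s t * (γ s t)⁻¹)) s :=
    hasDerivAt_matrix_inv (fun u => hγinv u t) (hγs s t)
  have hPt : HasDerivAt (fun v => (γ s v)⁻¹)
      (-((γ s t)⁻¹ * γt s t * (γ s t)⁻¹)) t :=
    hasDerivAt_matrix_inv (fun v => hγinv s v) (hγt s t)
  -- compute DtEs
  have hfun1 : (fun u => DtE u t) = fun u =>
      εt u t - (1 / 2 : ℝ) • (γt u t * (γ u t)⁻¹ * ε u t + ε u t * (γ u t)⁻¹ * γt u t) :=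
    funext fun u => hDtE u t
  have hD1 := (hεts s t).fun_sub (HasDerivAt.fun_const_smul ((1:ℝ)/2)
    ((((hγts s t).matrix_mul hPs).matrix_mul (hεs s t)).fun_add
      (((hεs s t).matrix_mul hPs).matrix_mul (hγts s t))))
  rw [← hfun1] at hD1
  have hDtEsval := (hDtEs s t).unique hD1
  -- compute DsEt
  have hfun2 : (fun v => DsE s v) = fun v =>
      εs s v - (1 / 2 : ℝ) • (γs s v * (γ s v)⁻¹ * ε s v + ε s v * (γ s v)⁻¹ * γs s v) :=
    funext fun v => hDsE s v
  have hD2 := (hεst s t).fun_sub (HasDerivAt.fun_const_smul ((1:ℝ)/2)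
    ((((hγst s t).matrix_mul hPt).matrix_mul (hεt s t)).fun_add
      (((hεt s t).matrix_mul hPt).matrix_mul (hγst s t))))
  rw [← hfun2] at hD2
  have hDsEtval := (hDsEt s t).unique hD2
  -- assemble and finish by module algebra
  rw [hDsDtE s t, hDtDsE s t, hDtEsval, hDsEtval, hDtE s t, hDsE s t]
  simp only [Ring.lie_def, mul_sub, sub_mul, mul_add, add_mul, smul_add, smul_sub,
    mul_neg, neg_mul, neg_sub, neg_neg, smul_neg, mul_assoc, smul_mul_assoc,
    mul_smul_comm, smul_smul, hgp]
  module
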